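/- The set {⟨û₂, w(û₆)⟩ : w ∈ W(E₆)} equals {−1, −1/4, 1/2}. (Equivalently: the possible distances between a vertex of type 2 and a vertex of type 6 of the Coxeter complex of type E₆ are exactly π, arccos(−1/4) and π/3.) -/

import Mathlib

noncomputable section

open scoped RealInnerProductSpace

/-- Euclidean space `ℝ⁸`. -/
abbrev E8Space := EuclideanSpace ℝ (Fin 8)

/-- The fundamental root vectors of the root system of type `E₆` inside `ℝ⁸`:
`r₁ = ½(1,1,1,−1,−1,−1,−1,−1)`, `rᵢ = eᵢ − eᵢ₋₁` for `2 ≤ i ≤ 5`, and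
`r₆ = ½(1,1,1,1,−1,1,1,1)` (here indexed by `Fin 6`, with `j = 0` corresponding
to `r₁` and `j = 5` to `r₆`). -/
def E6root : Fin 6 → E8Space := fun j =>
  if j = 0 then WithLp.toLp 2 (fun i : Fin 8 => if (i : ℕ) < 3 then (1 : ℝ) / 2 else -(1 / 2))
  else if j = 5 then WithLp.toLp 2 (fun i : Fin 8 => if (i : ℕ) = 4 then -(1 : ℝ) / 2 else 1 / 2)
  else WithLp.toLp 2 (fun i : Fin 8 => if (i : ℕ) = (j : ℕ) then (1 : ℝ)
        else if (i : ℕ) + 1 = (j : ℕ) then -1 else 0)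

/-- The Weyl group `W(E₆)`: the subgroup of linear isometries of `ℝ⁸` generated by the
reflections `s_r(x) = x − 2(⟨x,r⟩/⟨r,r⟩)r` in the fundamental root vectors of type `E₆`.
These generators preserve the subspace `V = {x : x₆ = x₇ = x₈}` realizing the Coxeter
complex of type `E₆`. -/
def WeylE6 : Subgroup (E8Space ≃ₗᵢ[ℝ] E8Space) :=
  Subgroup.closure
    { f | ∃ j : Fin 6, ∀ x : E8Space,
        f x = x - ((2 * ⟪x, E6root j⟫ / ⟪E6root j, E6root j⟫) • E6root j) }

/-- `û₂ = (−3,3,3,3,3,−1,−1,−1)/(4√3)`, a unit vector representing a vertex of type 2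
of the Coxeter complex of type `E₆`. -/
def u2hatE6 : E8Space := WithLp.toLp 2 fun i : Fin 8 =>
  (if (i : ℕ) = 0 then -3 else if (i : ℕ) < 5 then 3 else -1) / (4 * Real.sqrt 3)

/-- `û₆ = (3,3,3,3,3,1,1,1)/(4√3)`, a unit vector representing a vertex of type 6
of the Coxeter complex of type `E₆`. -/
def u6hatE6 : E8Space := WithLp.toLp 2 fun i : Fin 8 =>
  (if (i : ℕ) < 5 then 3 else 1) / (4 * Real.sqrt 3)


def rz : Fin 6 → Fin 8 → ℤ := fun j =>
  if j = 0 then (fun i => if (i : ℕ) < 3 then (1 : ℤ) else -1)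
  else if j = 5 then (fun i => if (i : ℕ) = 4 then (-1 : ℤ) else 1)
  else (fun i => if (i : ℕ) = (j : ℕ) then (2 : ℤ)
        else if (i : ℕ) + 1 = (j : ℕ) then -2 else 0)

def Vz : Fin 27 → Fin 8 → ℤ :=
  ![![3, 3, 3, 3, 3, 1, 1, 1],
     ![-6, 0, 0, 0, 0, -2, -2, -2],
     ![-3, -3, -3, -3, 3, 1, 1, 1],
     ![-3, -3, -3, 3, -3, 1, 1, 1],
     ![-3, -3, 3, -3, -3, 1, 1, 1],
     ![-3, -3, 3, 3, 3, 1, 1, 1],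
     ![-3, 3, -3, -3, -3, 1, 1, 1],
     ![-3, 3, -3, 3, 3, 1, 1, 1],
     ![-3, 3, 3, -3, 3, 1, 1, 1],
     ![-3, 3, 3, 3, -3, 1, 1, 1],
     ![0, -6, 0, 0, 0, -2, -2, -2],
     ![0, 0, -6, 0, 0, -2, -2, -2],
     ![0, 0, 0, -6, 0, -2, -2, -2],
     ![0, 0, 0, 0, -6, -2, -2, -2],
     ![0, 0, 0, 0, 0, 4, 4, 4],
     ![0, 0, 0, 0, 6, -2, -2, -2],
     ![0, 0, 0, 6, 0, -2, -2, -2],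
     ![0, 0, 6, 0, 0, -2, -2, -2],
     ![0, 6, 0, 0, 0, -2, -2, -2],
     ![3, -3, -3, -3, -3, 1, 1, 1],
     ![3, -3, -3, 3, 3, 1, 1, 1],
     ![3, -3, 3, -3, 3, 1, 1, 1],
     ![3, -3, 3, 3, -3, 1, 1, 1],
     ![3, 3, -3, -3, 3, 1, 1, 1],
     ![3, 3, -3, 3, -3, 1, 1, 1],
     ![3, 3, 3, -3, -3, 1, 1, 1],
     ![6, 0, 0, 0, 0, -2, -2, -2]]

def permE : Fin 6 → Fin 27 → Fin 27 :=
  ![![0, 1, 12, 13, 4, 17, 6, 18, 8, 9, 10, 11, 2, 3, 25, 15, 16, 5, 7, 19, 26, 21, 22, 23, 24, 14, 20],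
     ![0, 10, 2, 3, 4, 5, 19, 20, 21, 22, 1, 11, 12, 13, 14, 15, 16, 17, 26, 6, 7, 8, 9, 23, 24, 25, 18],
     ![0, 1, 2, 3, 6, 7, 4, 5, 8, 9, 11, 10, 12, 13, 14, 15, 16, 18, 17, 19, 20, 23, 24, 21, 22, 25, 26],
     ![0, 1, 2, 4, 3, 5, 6, 8, 7, 9, 10, 12, 11, 13, 14, 15, 17, 16, 18, 19, 21, 20, 22, 23, 25, 24, 26],
     ![0, 1, 3, 2, 4, 5, 6, 7, 9, 8, 10, 11, 13, 12, 14, 16, 15, 17, 18, 19, 20, 22, 21, 24, 23, 25, 26],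
     ![15, 9, 14, 3, 4, 5, 6, 7, 8, 1, 22, 24, 25, 13, 2, 0, 16, 17, 18, 19, 20, 21, 10, 23, 11, 12, 26]]


def dotz (a b : Fin 8 → ℤ) : ℤ :=
  a 0 * b 0 + a 1 * b 1 + a 2 * b 2 + a 3 * b 3 + a 4 * b 4 + a 5 * b 5 + a 6 * b 6 + a 7 * b 7

def v2z : Fin 8 → ℤ := ![-3, 3, 3, 3, 3, -1, -1, -1]

lemma reflz_eq : ∀ j : Fin 6, ∀ k : Fin 27, ∀ i : Fin 8,
    4 * Vz k i - dotz (Vz k) (rz j) * rz j i = 4 * Vz (permE j k) i := by decide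

lemma dot_vals : ∀ k : Fin 27,
    dotz v2z (Vz k) = -48 ∨ dotz v2z (Vz k) = -12 ∨ dotz v2z (Vz k) = 24 := by decide

lemma Vz_inj' : ∀ k m : Fin 27, k ≠ m → ∃ i, Vz k i ≠ Vz m i := by decide

/-- Real versions of the 27 orbit vectors. -/
def Vr : Fin 27 → E8Space := fun k => WithLp.toLp 2 (fun i => (Vz k i : ℝ))

def V2r : E8Space := WithLp.toLp 2 (fun i => (v2z i : ℝ))

lemma root_eq : ∀ j : Fin 6, ∀ i : Fin 8, E6root j i = (rz j i : ℝ) / 2 := by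
  intro j i
  simp only [E6root, rz]
  split_ifs <;>
    simp only [PiLp.toLp_apply, Int.cast_ite, Int.cast_one, Int.cast_neg, Int.cast_two, Int.cast_zero] <;>
    split_ifs <;> norm_num

lemma inner_Vr_root (k : Fin 27) (j : Fin 6) :
    ⟪Vr k, E6root j⟫ = (dotz (Vz k) (rz j) : ℝ) / 2 := by
  simp only [PiLp.inner_apply, RCLike.inner_apply, conj_trivial, Fin.sum_univ_eight,
    Vr, PiLp.toLp_apply, root_eq, dotz]
  push_cast
  ring

lemma root_norm (j : Fin 6) : ⟪E6root j, E6root j⟫ = (2 : ℝ) := by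
  have h : dotz (rz j) (rz j) = 8 := by revert j; decide
  simp only [PiLp.inner_apply, RCLike.inner_apply, conj_trivial, Fin.sum_univ_eight, root_eq]
  have h' : ((dotz (rz j) (rz j) : ℤ) : ℝ) = 8 := by rw [h]; norm_num
  simp only [dotz] at h'
  push_cast at h'
  nlinarith [h']

lemma gen_apply {f : E8Space ≃ₗᵢ[ℝ] E8Space} {j : Fin 6}
    (hf : ∀ x : E8Space, f x = x - ((2 * ⟪x, E6root j⟫ / ⟪E6root j, E6root j⟫) • E6root j))
    (k : Fin 27) : f (Vr k) = Vr (permE j k) := by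
  ext i
  have h0 := reflz_eq j k i
  have h : ((4 * Vz k i : ℤ) : ℝ) - ((dotz (Vz k) (rz j) : ℤ) : ℝ) * ((rz j i : ℤ) : ℝ)
      = ((4 * Vz (permE j k) i : ℤ) : ℝ) := by exact_mod_cast h0
  push_cast at h
  have : f (Vr k) i = Vr k i - (2 * ⟪Vr k, E6root j⟫ / ⟪E6root j, E6root j⟫) * E6root j i := by
    rw [hf]; rfl
  rw [this, inner_Vr_root, root_norm, root_eq]
  show _ = (Vz (permE j k) i : ℝ)
  have hV : Vr k i = (Vz k i : ℝ) := rfl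
  rw [hV]
  linear_combination h / 4

lemma Vr_inj : Function.Injective Vr := by
  intro a b hab
  by_contra hne
  obtain ⟨i, hi⟩ := Vz_inj' a b hne
  apply hi
  have := congrArg (fun v => v i) hab
  simp only [Vr, PiLp.toLp_apply] at this
  exact_mod_cast this

lemma orbit_lemma {w : E8Space ≃ₗᵢ[ℝ] E8Space} (hw : w ∈ WeylE6) :
    ∀ k : Fin 27, ∃ m : Fin 27, w (Vr k) = Vr m := by
  refine Subgroup.closure_induction ?_ ?_ ?_ ?_ hw
  · rintro f ⟨j, hj⟩ k
    exact ⟨permE j k, gen_apply hj k⟩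
  · intro k; exact ⟨k, rfl⟩
  · rintro x y hx hy px py k
    obtain ⟨m, hm⟩ := py k
    obtain ⟨n, hn⟩ := px m
    refine ⟨n, ?_⟩
    rw [LinearIsometryEquiv.coe_mul, Function.comp_apply, hm, hn]
  · rintro x hx px
    set g : Fin 27 → Fin 27 := fun k => (px k).choose with hg
    have hspec : ∀ k, x (Vr k) = Vr (g k) := fun k => (px k).choose_spec
    have ginj : Function.Injective g := by
      intro a b hab
      apply Vr_inj
      apply x.injective
      rw [hspec a, hspec b, hab]
    have gsurj : Function.Surjective g := Finite.surjective_of_injective ginj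
    intro k
    obtain ⟨m, hm⟩ := gsurj k
    refine ⟨m, ?_⟩
    rw [LinearIsometryEquiv.coe_inv]
    rw [← hm, ← hspec m, x.symm_apply_apply]

lemma hu6 : u6hatE6 = (4 * Real.sqrt 3)⁻¹ • Vr 0 := by
  ext i
  show _ = (4 * Real.sqrt 3)⁻¹ * Vr 0 i
  fin_cases i <;> · show _ / _ = _ * ((_ : ℤ) : ℝ)
                    norm_num [u6hatE6, Vr, Vz, div_eq_inv_mul]

lemma hu2 : u2hatE6 = (4 * Real.sqrt 3)⁻¹ • V2r := by
  ext i
  show _ = (4 * Real.sqrt 3)⁻¹ * V2r i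
  fin_cases i <;> · show _ / _ = _ * ((_ : ℤ) : ℝ)
                    norm_num [u2hatE6, V2r, v2z, div_eq_inv_mul]

lemma inner_V2r_Vr (m : Fin 27) : ⟪V2r, Vr m⟫ = (dotz v2z (Vz m) : ℝ) := by
  simp only [PiLp.inner_apply, RCLike.inner_apply, conj_trivial, Fin.sum_univ_eight,
    Vr, V2r, PiLp.toLp_apply, dotz]
  push_cast
  ring

lemma value_lemma {w : E8Space ≃ₗᵢ[ℝ] E8Space} {m : Fin 27} (hm : w (Vr 0) = Vr m) :
    ⟪u2hatE6, w u6hatE6⟫ = (dotz v2z (Vz m) : ℝ) / 48 := by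
  have h3 : Real.sqrt 3 * Real.sqrt 3 = 3 := Real.mul_self_sqrt (by norm_num)
  rw [hu6, hu2, map_smul, hm, real_inner_smul_left, real_inner_smul_right, inner_V2r_Vr]
  have h48 : (4 * Real.sqrt 3) * (4 * Real.sqrt 3) = 48 := by nlinarith [h3]
  rw [← mul_assoc, ← mul_inv, h48]
  ring

/-- The generating reflections, as elements of the isometry group. -/
def gE (j : Fin 6) : E8Space ≃ₗᵢ[ℝ] E8Space := Submodule.reflection ((ℝ ∙ (E6root j))ᗮ)

lemma gE_formula (j : Fin 6) : ∀ x : E8Space,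
    gE j x = x - ((2 * ⟪x, E6root j⟫ / ⟪E6root j, E6root j⟫) • E6root j) := by
  intro x
  rw [gE, Submodule.reflection_orthogonal_apply, Submodule.reflection_singleton_apply]
  rw [real_inner_comm x (E6root j), root_norm]
  simp only [RCLike.ofReal_real_eq_id, id]
  have hn : ‖E6root j‖ ^ 2 = (2 : ℝ) := by
    rw [← real_inner_self_eq_norm_sq]; exact root_norm j
  rw [hn]
  match_scalars <;> ring

lemma gE_mem (j : Fin 6) : gE j ∈ WeylE6 :=
  Subgroup.subset_closure ⟨j, gE_formula j⟩

lemma gE_apply (j : Fin 6) (k : Fin 27) : gE j (Vr k) = Vr (permE j k) :=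
  gen_apply (gE_formula j) k

theorem inner_u2hatE6_u6hatE6_orbit_eq :
    {t : ℝ | ∃ w ∈ WeylE6, ⟪u2hatE6, w u6hatE6⟫ = t} = {-1, -1/4, 1/2} := by
  ext t
  simp only [Set.mem_setOf_eq, Set.mem_insert_iff, Set.mem_singleton_iff]
  constructor
  · rintro ⟨w, hw, rfl⟩
    obtain ⟨m, hm⟩ := orbit_lemma hw 0
    rw [value_lemma hm]
    rcases dot_vals m with h | h | h <;> rw [h] <;> norm_num
  · have mkw : ∀ (L : List (Fin 6)),
        (L.map gE).prod ∈ WeylE6 ∧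
        (L.map gE).prod (Vr 0) = Vr (L.foldr permE 0) := by
      intro L
      induction L with
      | nil => exact ⟨one_mem _, rfl⟩
      | cons j L ih =>
        refine ⟨mul_mem (gE_mem j) ih.1, ?_⟩
        rw [List.map_cons, List.prod_cons, LinearIsometryEquiv.coe_mul, Function.comp_apply,
          ih.2, gE_apply, List.foldr_cons]
    rintro (rfl | rfl | rfl)
    · obtain ⟨hmem, happ⟩ := mkw [5, 4, 3, 0, 2, 1, 3, 2, 4, 3, 0, 5, 4, 3, 2, 1].reverse
      refine ⟨_, hmem, ?_⟩
      rw [value_lemma (m := 19) (by rw [happ]; congr 1)]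
      norm_num [show dotz v2z (Vz 19) = -48 from by decide]
    · obtain ⟨hmem, happ⟩ := mkw [5, 4, 3, 0, 2, 1, 3, 2, 4, 3, 0, 5].reverse
      refine ⟨_, hmem, ?_⟩
      rw [value_lemma (m := 2) (by rw [happ]; congr 1)]
      norm_num [show dotz v2z (Vz 2) = -12 from by decide]
    · refine ⟨1, one_mem _, ?_⟩
      rw [value_lemma (m := 0) rfl]
      norm_num [show dotz v2z (Vz 0) = 24 from by decide]
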